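/- arXiv:0710.5512 — 2 statements merged into one kernel-verified Lean document; each statement's English description precedes it below -/
import Mathlib

section
/- If v: [a,1] → ℝ is a proper U-convex function with respect to the mean-variance utility U(θ,Y) = E[Y] − θ·Var[Y] on a non-atomic probability space, then v(θ) = sup_{y ≤ 0} {θ·y − v*(y)}; in particular v is convex and non-increasing. -/
open MeasureTheory ProbabilityTheory Set

/-- If `v : [a,1] → ℝ` is a proper U-convex function w.r.t. the mean-variance
utility `U(θ,Y) = E[Y] − θ·Var[Y]` on a non-atomic probability space (so that
random variables of every variance exist), then
`v(θ) = sup_{y ≤ 0} {θ·y − v*(y)}`; in particular `v` is convex and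
non-increasing. -/
theorem uConvex_eq_sup_nonpos_and_convex_antitone
    {Ω : Type*} [MeasureSpace Ω] [IsProbabilityMeasure (ℙ : Measure Ω)]
    (a : ℝ) (ha : 0 < a) (ha1 : a ≤ 1)
    (hvarsurj : ∀ s : ℝ, 0 ≤ s → ∃ Y : Ω → ℝ, MemLp Y 2 ℙ ∧ variance Y ℙ = s)
    (v : ℝ → ℝ)
    (π : {Y : Ω → ℝ // MemLp Y 2 ℙ} → ℝ)
    (hbdd : ∀ θ ∈ Set.Icc a 1,
      BddAbove (Set.range fun Y : {Y : Ω → ℝ // MemLp Y 2 ℙ} =>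
        (∫ ω, Y.1 ω) - θ * variance Y.1 ℙ - π Y))
    (hUconv : ∀ θ ∈ Set.Icc a 1,
      v θ = ⨆ Y : {Y : Ω → ℝ // MemLp Y 2 ℙ},
        ((∫ ω, Y.1 ω) - θ * variance Y.1 ℙ - π Y)) :
    (∀ θ ∈ Set.Icc a 1,
      v θ = ⨆ y : {y : ℝ // y ≤ 0},
        (θ * y.1 - ⨆ θ' : Set.Icc a 1, (θ'.1 * y.1 - v θ'.1)))
    ∧ ConvexOn ℝ (Set.Icc a 1) v ∧ AntitoneOn v (Set.Icc a 1) := by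
  set Y0 : {Y : Ω → ℝ // MemLp Y 2 ℙ} := ⟨fun _ => 0, memLp_const 0⟩ with hY0def
  have hne : Nonempty {Y : Ω → ℝ // MemLp Y 2 ℙ} := ⟨Y0⟩
  have hneθ : Nonempty (Set.Icc a 1) := ⟨⟨a, le_refl a, ha1⟩⟩
  have hney : Nonempty {y : ℝ // y ≤ 0} := ⟨⟨0, le_refl 0⟩⟩
  -- S θ Y ≤ v θ
  have hSle : ∀ θ ∈ Set.Icc a 1, ∀ Y : {Y : Ω → ℝ // MemLp Y 2 ℙ},
      (∫ ω, Y.1 ω) - θ * variance Y.1 ℙ - π Y ≤ v θ := by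
    intro θ hθ Y
    rw [hUconv θ hθ]
    exact le_ciSup (hbdd θ hθ) Y
  have hY0 : ∀ θ ∈ Set.Icc a 1, -π Y0 ≤ v θ := by
    intro θ hθ
    have := hSle θ hθ Y0
    have hv : variance Y0.1 ℙ = 0 := by
      rw [hY0def]; exact variance_zero ℙ
    have hi : (∫ ω, Y0.1 ω) = 0 := by rw [hY0def]; simp
    rw [hv, hi] at this; linarith
  -- conjugate bounded above for y ≤ 0
  have hconjbdd : ∀ y : ℝ, y ≤ 0 → ∀ θ' : Set.Icc a 1,
      θ'.1 * y - v θ'.1 ≤ π Y0 := by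
    intro y hy θ'
    have h1 : θ'.1 * y ≤ 0 := mul_nonpos_of_nonneg_of_nonpos (le_trans ha.le θ'.2.1) hy
    have h2 := hY0 θ'.1 θ'.2
    linarith
  refine ⟨?_, ?_, ?_⟩
  · intro θ hθ
    set g : {y : ℝ // y ≤ 0} → ℝ := fun y =>
      θ * y.1 - ⨆ θ' : Set.Icc a 1, (θ'.1 * y.1 - v θ'.1) with hg
    have hgle : ∀ y : {y : ℝ // y ≤ 0}, g y ≤ v θ := by
      intro y
      have hb : BddAbove (Set.range fun θ' : Set.Icc a 1 => θ'.1 * y.1 - v θ'.1) :=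
        ⟨π Y0, by rintro _ ⟨θ', rfl⟩; exact hconjbdd y.1 y.2 θ'⟩
      have := le_ciSup hb (⟨θ, hθ⟩ : Set.Icc a 1)
      simp only at this
      simp only [hg]
      linarith
    have hgbdd : BddAbove (Set.range g) := ⟨v θ, by rintro _ ⟨y, rfl⟩; exact hgle y⟩
    refine le_antisymm ?_ (ciSup_le hgle)
    apply le_of_forall_pos_le_add
    intro ε hε
    have hlt : v θ - ε < ⨆ Y : {Y : Ω → ℝ // MemLp Y 2 ℙ},
        ((∫ ω, Y.1 ω) - θ * variance Y.1 ℙ - π Y) := by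
      rw [← hUconv θ hθ]; linarith
    obtain ⟨Y, hY⟩ := exists_lt_of_lt_ciSup hlt
    set y : ℝ := -variance Y.1 ℙ with hyd
    have hy : y ≤ 0 := by
      simp only [hyd, neg_nonpos]; exact variance_nonneg _ _
    have hcs : (⨆ θ' : Set.Icc a 1, (θ'.1 * y - v θ'.1)) ≤
        -((∫ ω, Y.1 ω) - π Y) := by
      apply ciSup_le
      intro θ'
      have := hSle θ'.1 θ'.2 Y
      simp only [hyd]
      linarith
    have hgY : v θ - ε ≤ g ⟨y, hy⟩ := by
      simp only [hg]
      have : θ * y = -(θ * variance Y.1 ℙ) := by rw [hyd]; ring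
      nlinarith [hcs]
    calc v θ ≤ g ⟨y, hy⟩ + ε := by linarith
      _ ≤ _ + ε := by gcongr; exact le_ciSup hgbdd ⟨y, hy⟩
  · refine ⟨convex_Icc a 1, ?_⟩
    intro x hx z hz s t hs ht hst
    have hmem : s * x + t * z ∈ Set.Icc a 1 := (convex_Icc a 1) hx hz hs ht hst
    simp only [smul_eq_mul]
    rw [hUconv _ hmem]
    apply ciSup_le
    intro Y
    have h1 := hSle x hx Y
    have h2 := hSle z hz Y
    have key : (∫ ω, Y.1 ω) - (s * x + t * z) * variance Y.1 ℙ - π Y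
        = s * ((∫ ω, Y.1 ω) - x * variance Y.1 ℙ - π Y)
          + t * ((∫ ω, Y.1 ω) - z * variance Y.1 ℙ - π Y) := by
      linear_combination (-(∫ ω, Y.1 ω) + π Y) * hst
    rw [key]
    exact add_le_add (mul_le_mul_of_nonneg_left h1 hs) (mul_le_mul_of_nonneg_left h2 ht)
  · intro x hx z hz hxz
    rw [hUconv z hz]
    apply ciSup_le
    intro Y
    have h1 := hSle x hx Y
    have hvar := variance_nonneg Y.1 ℙ
    nlinarith
end

section
/- Let v: [a,1] → ℝ be proper and U-convex with respect to U(θ,Y) = E[Y] − θ·Var[Y]. Then the U-subdifferential satisfies ∂_U v(θ) = { Y ∈ L²(P) : −Var[Y] ∈ ∂v(θ) }, where ∂v is the ordinary convex subdifferential of v. -/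
open MeasureTheory ProbabilityTheory Set

/-- For a proper U-convex `v` (w.r.t. `U(θ,Y) = E[Y] − θ·Var[Y]`), the
U-subdifferential is `∂_U v(θ) = {Y ∈ L² : −Var[Y] ∈ ∂v(θ)}`, where `∂v` is
the ordinary convex subdifferential of `v` on `Θ = [a,1]`. -/
theorem uSubdifferential_eq_neg_variance_subgradient
    {Ω : Type*} [MeasureSpace Ω] [IsProbabilityMeasure (ℙ : Measure Ω)]
    (a : ℝ) (ha : 0 < a) (ha1 : a ≤ 1)
    (hvarsurj : ∀ s : ℝ, 0 ≤ s → ∃ Y : Ω → ℝ, MemLp Y 2 ℙ ∧ variance Y ℙ = s)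
    (v : ℝ → ℝ)
    (π : {Y : Ω → ℝ // MemLp Y 2 ℙ} → ℝ)
    (hbdd : ∀ θ ∈ Set.Icc a 1,
      BddAbove (Set.range fun Y : {Y : Ω → ℝ // MemLp Y 2 ℙ} =>
        (∫ ω, Y.1 ω) - θ * variance Y.1 ℙ - π Y))
    (hUconv : ∀ θ ∈ Set.Icc a 1,
      v θ = ⨆ Y : {Y : Ω → ℝ // MemLp Y 2 ℙ},
        ((∫ ω, Y.1 ω) - θ * variance Y.1 ℙ - π Y))
    (θ : ℝ) (hθ : θ ∈ Set.Icc a 1) :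
    {Y : {Y : Ω → ℝ // MemLp Y 2 ℙ} |
        v θ = ((∫ ω, Y.1 ω) - θ * variance Y.1 ℙ)
          - ⨆ θ' : Set.Icc a 1, ((∫ ω, Y.1 ω) - θ'.1 * variance Y.1 ℙ - v θ'.1)}
      = {Y : {Y : Ω → ℝ // MemLp Y 2 ℙ} |
          ∀ θ' ∈ Set.Icc a 1, v θ + (-(variance Y.1 ℙ)) * (θ' - θ) ≤ v θ'} := by
  have hne : Nonempty (Set.Icc a 1) := ⟨⟨a, le_refl a, ha1⟩⟩
  -- a lower bound for v on [a,1]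
  set Y₀ : {Y : Ω → ℝ // MemLp Y 2 ℙ} := ⟨fun _ => 0, memLp_const 0⟩ with hY₀
  have hvlb : ∀ θ' ∈ Set.Icc a 1, -π Y₀ ≤ v θ' := by
    intro θ' hθ'
    have h := le_ciSup (hbdd θ' hθ') Y₀
    rw [← hUconv θ' hθ'] at h
    have h0 : (∫ ω, (Y₀.1 ω)) - θ' * variance Y₀.1 ℙ - π Y₀ = -π Y₀ := by
      have h1 : (∫ ω, (Y₀.1 ω)) = 0 := by simp [hY₀]
      have h2 : variance Y₀.1 ℙ = 0 := by
        exact variance_zero (ℙ : Measure Ω)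
      rw [h1, h2]; ring
    rwa [h0] at h
  ext Y
  set V := variance Y.1 ℙ with hV
  have hVnn : 0 ≤ V := variance_nonneg _ _
  set f := ∫ ω, Y.1 ω with hf
  have hBdd : BddAbove (Set.range fun θ' : Set.Icc a 1 => f - θ'.1 * V - v θ'.1) := by
    refine ⟨f + π Y₀, ?_⟩
    rintro x ⟨θ', rfl⟩
    have h1 := hvlb θ'.1 θ'.2
    have h2 : 0 ≤ θ'.1 * V := mul_nonneg (le_trans ha.le θ'.2.1) hVnn
    simp only
    linarith
  simp only [Set.mem_setOf_eq]
  constructor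
  · intro hv θ' hθ'
    have key : f - θ' * V - v θ' ≤ ⨆ θ'' : Set.Icc a 1, (f - θ''.1 * V - v θ''.1) :=
      le_ciSup hBdd ⟨θ', hθ'⟩
    have key2 : f - θ' * V - v θ' ≤ f - θ * V - v θ := by
      rw [hv]; linarith
    nlinarith
  · intro h2
    have hle : (⨆ θ'' : Set.Icc a 1, (f - θ''.1 * V - v θ''.1)) ≤ f - θ * V - v θ := by
      refine ciSup_le fun θ'' => ?_
      have := h2 θ''.1 θ''.2
      nlinarith
    have hge : f - θ * V - v θ ≤ ⨆ θ'' : Set.Icc a 1, (f - θ''.1 * V - v θ''.1) :=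
      le_ciSup hBdd ⟨θ, hθ⟩
    linarith
end
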